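/- Let F0∈ℝ and let ψ,u,v∥,ρ be smooth on {R>0}×ℝ_φ×ℝ_Z. Set B := ((1/R)∂_Zψ)e_R+(F0/R)e_φ+(−(1/R)∂_Rψ)e_Z and v := (−R∂_Zu)e_R+(R∂_Ru)e_Z + v∥B. Then the advection-compression combination satisfies v·∇ρ + ρ∇·v = −R[ρ,u] − 2ρ∂_Zu + (v∥F0/R²)∂_φρ + (v∥/R)[ρ,ψ] + (ρ/R)[v∥,ψ] + (ρF0/R²)∂_φv∥; equivalently, any ρ with ∂_tρ = −v·∇ρ − ρ∇·v satisfies ∂_tρ = R[ρ,u] + 2ρ∂_Zu − (v∥F0/R²)∂_φρ − (v∥/R)[ρ,ψ] − (ρ/R)[v∥,ψ] − (ρF0/R²)∂_φv∥. -/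

import Mathlib

noncomputable section
set_option linter.unusedVariables false

open Real

/-- Scalar fields as functions of `(t, R, φ, Z)`. -/
abbrev F4 := ℝ → ℝ → ℝ → ℝ → ℝ

/-- Partial derivative in time `t`. -/
def dT (f : F4) (t R φ Z : ℝ) : ℝ := deriv (fun s => f s R φ Z) t

/-- Partial derivative in `R`. -/
def dR (f : F4) (t R φ Z : ℝ) : ℝ := deriv (fun r => f t r φ Z) R

/-- Partial derivative in `φ`. -/
def dP (f : F4) (t R φ Z : ℝ) : ℝ := deriv (fun a => f t R a Z) φ

/-- Partial derivative in `Z`. -/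
def dZ (f : F4) (t R φ Z : ℝ) : ℝ := deriv (fun z => f t R φ z) Z

/-- Joint smoothness (C^∞) in `(t,R,φ,Z)`. -/
def Smooth4 (f : F4) : Prop :=
  ContDiff ℝ (⊤ : ℕ∞) fun q : ℝ × ℝ × ℝ × ℝ => f q.1 q.2.1 q.2.2.1 q.2.2.2

/-- Poisson bracket `[a,b] = ∂_R a ∂_Z b − ∂_Z a ∂_R b` (spatial). -/
def pb (a b : F4) (t R φ Z : ℝ) : ℝ :=
  dR a t R φ Z * dZ b t R φ Z - dZ a t R φ Z * dR b t R φ Z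

/-- Grad–Shafranov operator `Δ* f = R ∂_R((1/R) ∂_R f) + ∂_ZZ f`. -/
def GS (f : F4) (t R φ Z : ℝ) : ℝ :=
  R * dR (fun s r a z => (1 / r) * dR f s r a z) t R φ Z + dZ (dZ f) t R φ Z

/-- Poloidal Laplacian `Δ_pol f = (1/R) ∂_R(R ∂_R f) + ∂_ZZ f`. -/
def LapPol (f : F4) (t R φ Z : ℝ) : ℝ :=
  (1 / R) * dR (fun s r a z => r * dR f s r a z) t R φ Z + dZ (dZ f) t R φ Z

/-- Cylindrical divergence `∇·F = (1/R)∂_R(R F_R) + (1/R)∂_φ F_φ + ∂_Z F_Z`. -/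
def divC (FR Fφ FZ : F4) (t R φ Z : ℝ) : ℝ :=
  (1 / R) * dR (fun s r a z => r * FR s r a z) t R φ Z + (1 / R) * dP Fφ t R φ Z
    + dZ FZ t R φ Z

/-- Scalar advection `X·∇f = X_R ∂_R f + (X_φ/R) ∂_φ f + X_Z ∂_Z f`. -/
def advS (XvR XvP XvZ f : F4) (t R φ Z : ℝ) : ℝ :=
  XvR t R φ Z * dR f t R φ Z + XvP t R φ Z / R * dP f t R φ Z + XvZ t R φ Z * dZ f t R φ Z

/-- `e_R`-component of `B = (1/R)∇ψ×e_φ + (F0/R)e_φ`. -/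
def BR (ψ : F4) : F4 := fun t R φ Z => (1 / R) * dZ ψ t R φ Z

/-- `e_φ`-component of the magnetic field. -/
def BP (F0 : ℝ) : F4 := fun _ R _ _ => F0 / R

/-- `e_Z`-component of the magnetic field. -/
def BZ (ψ : F4) : F4 := fun t R φ Z => -(1 / R) * dR ψ t R φ Z

/-- `e_R`-component of `v_pol = −R∇u×e_φ`. -/
def vR (u : F4) : F4 := fun t R φ Z => -R * dZ u t R φ Z

/-- `e_Z`-component of `v_pol = −R∇u×e_φ`. -/
def vZ (u : F4) : F4 := fun t R φ Z => R * dR u t R φ Z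

/-- The zero field. -/
def zeroF : F4 := fun _ _ _ _ => 0

/-- `∇_pol a · ∇_pol b`. -/
def gdot (a b : F4) : F4 := fun t R φ Z =>
  dR a t R φ Z * dR b t R φ Z + dZ a t R φ Z * dZ b t R φ Z

/-- `|B|² = (F0² + (∂_Rψ)² + (∂_Zψ)²)/R²`. -/
def B2 (F0 : ℝ) (ψ : F4) : F4 := fun t R φ Z =>
  (F0 ^ 2 + (dR ψ t R φ Z) ^ 2 + (dZ ψ t R φ Z) ^ 2) / R ^ 2

/-- `|B_pol|² = ((∂_Rψ)² + (∂_Zψ)²)/R²`. -/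
def Bpol2 (ψ : F4) : F4 := fun t R φ Z =>
  ((dR ψ t R φ Z) ^ 2 + (dZ ψ t R φ Z) ^ 2) / R ^ 2

/-- `ρ̂ = R²ρ`. -/
def rh (ρ : F4) : F4 := fun t R φ Z => R ^ 2 * ρ t R φ Z

/-- `|∇_pol u|²`. -/
def gradu2 (u : F4) : F4 := fun t R φ Z => (dR u t R φ Z) ^ 2 + (dZ u t R φ Z) ^ 2

/-- `e_R`-component of the total velocity `v = v_pol + v∥B`. -/
def vtotR (ψ u vpar : F4) : F4 := fun t R φ Z =>
  vR u t R φ Z + vpar t R φ Z * BR ψ t R φ Z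

/-- `e_φ`-component of the total velocity. -/
def vtotP (F0 : ℝ) (vpar : F4) : F4 := fun t R φ Z => vpar t R φ Z * BP F0 t R φ Z

/-- `e_Z`-component of the total velocity. -/
def vtotZ (ψ u vpar : F4) : F4 := fun t R φ Z =>
  vZ u t R φ Z + vpar t R φ Z * BZ ψ t R φ Z

def G (f : F4) : ℝ × ℝ × ℝ × ℝ → ℝ := fun q => f q.1 q.2.1 q.2.2.1 q.2.2.2

lemma curveR_hasDerivAt (t R φ Z : ℝ) :
    HasDerivAt (fun r : ℝ => ((t, r, φ, Z) : ℝ×ℝ×ℝ×ℝ)) (0,1,0,0) R :=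
  HasDerivAt.prodMk (hasDerivAt_const _ _) (HasDerivAt.prodMk (hasDerivAt_id R)
    (HasDerivAt.prodMk (hasDerivAt_const _ _) (hasDerivAt_const _ _)))

lemma curveP_hasDerivAt (t R φ Z : ℝ) :
    HasDerivAt (fun a : ℝ => ((t, R, a, Z) : ℝ×ℝ×ℝ×ℝ)) (0,0,1,0) φ :=
  HasDerivAt.prodMk (hasDerivAt_const _ _) (HasDerivAt.prodMk (hasDerivAt_const _ _)
    (HasDerivAt.prodMk (hasDerivAt_id φ) (hasDerivAt_const _ _)))

lemma curveZ_hasDerivAt (t R φ Z : ℝ) :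
    HasDerivAt (fun z : ℝ => ((t, R, φ, z) : ℝ×ℝ×ℝ×ℝ)) (0,0,0,1) Z :=
  HasDerivAt.prodMk (hasDerivAt_const _ _) (HasDerivAt.prodMk (hasDerivAt_const _ _)
    (HasDerivAt.prodMk (hasDerivAt_const _ _) (hasDerivAt_id Z)))

lemma sliceR_hasDerivAt {f : F4} (hf : Smooth4 f) (t R φ Z : ℝ) :
    HasDerivAt (fun r => f t r φ Z) (fderiv ℝ (G f) (t,R,φ,Z) (0,1,0,0)) R := by
  have h1 : HasFDerivAt (G f) (fderiv ℝ (G f) (t,R,φ,Z)) (t,R,φ,Z) :=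
    (hf.differentiable (by simp) (t,R,φ,Z)).hasFDerivAt
  exact h1.comp_hasDerivAt R (curveR_hasDerivAt t R φ Z)

lemma dR_eq {f : F4} (hf : Smooth4 f) (t R φ Z : ℝ) :
    dR f t R φ Z = fderiv ℝ (G f) (t,R,φ,Z) (0,1,0,0) :=
  (sliceR_hasDerivAt hf t R φ Z).deriv

lemma hasDerivAt_dR {f : F4} (hf : Smooth4 f) (t R φ Z : ℝ) :
    HasDerivAt (fun r => f t r φ Z) (dR f t R φ Z) R := by
  rw [dR_eq hf]; exact sliceR_hasDerivAt hf t R φ Z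

lemma Smooth4.dR' {f : F4} (hf : Smooth4 f) : Smooth4 (dR f) := by
  have : (fun q : ℝ×ℝ×ℝ×ℝ => dR f q.1 q.2.1 q.2.2.1 q.2.2.2)
      = fun q => fderiv ℝ (G f) q (0,1,0,0) := by
    funext q; exact dR_eq hf q.1 q.2.1 q.2.2.1 q.2.2.2
  unfold Smooth4
  rw [this]
  exact (hf.fderiv_right (by simp)).clm_apply contDiff_const

lemma sliceP_hasDerivAt {f : F4} (hf : Smooth4 f) (t R φ Z : ℝ) :
    HasDerivAt (fun a => f t R a Z) (fderiv ℝ (G f) (t,R,φ,Z) (0,0,1,0)) φ :=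
  by
  have h1 : HasFDerivAt (G f) (fderiv ℝ (G f) (t,R,φ,Z)) (t,R,φ,Z) :=
    (hf.differentiable (by simp) (t,R,φ,Z)).hasFDerivAt
  exact h1.comp_hasDerivAt φ
    (curveP_hasDerivAt t R φ Z)

lemma sliceZ_hasDerivAt {f : F4} (hf : Smooth4 f) (t R φ Z : ℝ) :
    HasDerivAt (fun z => f t R φ z) (fderiv ℝ (G f) (t,R,φ,Z) (0,0,0,1)) Z :=
  by
  have h1 : HasFDerivAt (G f) (fderiv ℝ (G f) (t,R,φ,Z)) (t,R,φ,Z) :=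
    (hf.differentiable (by simp) (t,R,φ,Z)).hasFDerivAt
  exact h1.comp_hasDerivAt Z
    (curveZ_hasDerivAt t R φ Z)

lemma dP_eq {f : F4} (hf : Smooth4 f) (t R φ Z : ℝ) :
    dP f t R φ Z = fderiv ℝ (G f) (t,R,φ,Z) (0,0,1,0) :=
  (sliceP_hasDerivAt hf t R φ Z).deriv

lemma dZ_eq {f : F4} (hf : Smooth4 f) (t R φ Z : ℝ) :
    dZ f t R φ Z = fderiv ℝ (G f) (t,R,φ,Z) (0,0,0,1) :=
  (sliceZ_hasDerivAt hf t R φ Z).deriv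

lemma hasDerivAt_dP {f : F4} (hf : Smooth4 f) (t R φ Z : ℝ) :
    HasDerivAt (fun a => f t R a Z) (dP f t R φ Z) φ := by
  rw [dP_eq hf]; exact sliceP_hasDerivAt hf t R φ Z

lemma hasDerivAt_dZ {f : F4} (hf : Smooth4 f) (t R φ Z : ℝ) :
    HasDerivAt (fun z => f t R φ z) (dZ f t R φ Z) Z := by
  rw [dZ_eq hf]; exact sliceZ_hasDerivAt hf t R φ Z

lemma Smooth4.dZ' {f : F4} (hf : Smooth4 f) : Smooth4 (dZ f) := by
  have : (fun q : ℝ×ℝ×ℝ×ℝ => dZ f q.1 q.2.1 q.2.2.1 q.2.2.2)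
      = fun q => fderiv ℝ (G f) q (0,0,0,1) := by
    funext q; exact dZ_eq hf q.1 q.2.1 q.2.2.1 q.2.2.2
  unfold Smooth4
  rw [this]
  exact (hf.fderiv_right (by simp)).clm_apply contDiff_const

-- Clairaut
lemma clairaut_RZ {f : F4} (hf : Smooth4 f) (t R φ Z : ℝ) :
    dR (dZ f) t R φ Z = dZ (dR f) t R φ Z := by
  have hG : ContDiff ℝ (⊤:ℕ∞) (G f) := hf
  have hd : ∀ y, HasFDerivAt (G f) (fderiv ℝ (G f) y) y :=
    fun y => (hG.differentiable (by simp) y).hasFDerivAt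
  have hd2 : HasFDerivAt (fderiv ℝ (G f)) (fderiv ℝ (fderiv ℝ (G f)) (t,R,φ,Z)) (t,R,φ,Z) :=
    (((hG.fderiv_right (m := (⊤:ℕ∞)) (by simp)).differentiable (by simp)) (t,R,φ,Z)).hasFDerivAt
  have hsymm := second_derivative_symmetric hd hd2 (0,1,0,0) (0,0,0,1)
  have e1 : dR (dZ f) t R φ Z
      = (fderiv ℝ (fderiv ℝ (G f)) (t,R,φ,Z) (0,1,0,0)) (0,0,0,1) := by
    rw [dR_eq hf.dZ']
    have : G (dZ f) = fun q => fderiv ℝ (G f) q (0,0,0,1) := by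
      funext q; exact dZ_eq hf q.1 q.2.1 q.2.2.1 q.2.2.2
    rw [this]
    rw [fderiv_clm_apply ((hG.fderiv_right (m := (⊤:ℕ∞)) (by simp)).differentiable (by simp) _)
      (differentiableAt_const _)]
    simp
  have e2 : dZ (dR f) t R φ Z
      = (fderiv ℝ (fderiv ℝ (G f)) (t,R,φ,Z) (0,0,0,1)) (0,1,0,0) := by
    rw [dZ_eq hf.dR']
    have : G (dR f) = fun q => fderiv ℝ (G f) q (0,1,0,0) := by
      funext q; exact dR_eq hf q.1 q.2.1 q.2.2.1 q.2.2.2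
    rw [this]
    rw [fderiv_clm_apply ((hG.fderiv_right (m := (⊤:ℕ∞)) (by simp)).differentiable (by simp) _)
      (differentiableAt_const _)]
    simp
  rw [e1, e2, hsymm]



lemma density_key (F0 : ℝ) (ψ u vpar ρ : F4)
    (hψ : Smooth4 ψ) (hu : Smooth4 u) (hv : Smooth4 vpar) (hρ : Smooth4 ρ)
    (t R φ Z : ℝ) (hR : 0 < R) :
    advS (vtotR ψ u vpar) (vtotP F0 vpar) (vtotZ ψ u vpar) ρ t R φ Z
        + ρ t R φ Z * divC (vtotR ψ u vpar) (vtotP F0 vpar) (vtotZ ψ u vpar) t R φ Z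
      = -R * pb ρ u t R φ Z - 2 * ρ t R φ Z * dZ u t R φ Z
        + (vpar t R φ Z * F0 / R ^ 2) * dP ρ t R φ Z
        + (vpar t R φ Z / R) * pb ρ ψ t R φ Z
        + (ρ t R φ Z / R) * pb vpar ψ t R φ Z
        + (ρ t R φ Z * F0 / R ^ 2) * dP vpar t R φ Z := by
  have hR0 : R ≠ 0 := ne_of_gt hR
  -- (A) radial term of the divergence
  have eA : dR (fun s r a z => r * vtotR ψ u vpar s r a z) t R φ Z
      = -(2 * R * dZ u t R φ Z + R ^ 2 * dR (dZ u) t R φ Z)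
        + (dR vpar t R φ Z * dZ ψ t R φ Z + vpar t R φ Z * dR (dZ ψ) t R φ Z) := by
    have hE : (fun r => r * vtotR ψ u vpar t r φ Z)
        =ᶠ[nhds R] (fun r => -(r ^ 2 * dZ u t r φ Z) + vpar t r φ Z * dZ ψ t r φ Z) := by
      filter_upwards [eventually_ne_nhds hR0] with r hr
      simp only [vtotR, vR, BR]
      field_simp
    have h1 : HasDerivAt (fun r => -(r ^ 2 * dZ u t r φ Z) + vpar t r φ Z * dZ ψ t r φ Z)
        (-(2 * R * dZ u t R φ Z + R ^ 2 * dR (dZ u) t R φ Z)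
          + (dR vpar t R φ Z * dZ ψ t R φ Z + vpar t R φ Z * dR (dZ ψ) t R φ Z)) R := by
      have := (((hasDerivAt_pow 2 R).mul (hasDerivAt_dR hu.dZ' t R φ Z)).neg).add
        ((hasDerivAt_dR hv t R φ Z).mul (hasDerivAt_dR hψ.dZ' t R φ Z))
      refine this.congr_deriv ?_
      norm_num
    show deriv (fun r => r * vtotR ψ u vpar t r φ Z) R = _
    rw [hE.deriv_eq, h1.deriv]
  -- (B) toroidal term
  have eB : dP (vtotP F0 vpar) t R φ Z = dP vpar t R φ Z * (F0 / R) := by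
    show deriv (fun a => vtotP F0 vpar t R a Z) φ = _
    simp only [vtotP, BP]
    exact ((hasDerivAt_dP hv t R φ Z).mul_const (F0 / R)).deriv
  -- (C) vertical term
  have eC : dZ (vtotZ ψ u vpar) t R φ Z
      = R * dZ (dR u) t R φ Z
        + (dZ vpar t R φ Z * (-(1 / R) * dR ψ t R φ Z)
            + vpar t R φ Z * (-(1 / R) * dZ (dR ψ) t R φ Z)) := by
    show deriv (fun z => vtotZ ψ u vpar t R φ z) Z = _
    simp only [vtotZ, vZ, BZ]
    have h1 : HasDerivAt (fun z => R * dR u t R φ z + vpar t R φ z * (-(1 / R) * dR ψ t R φ z))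
        (R * dZ (dR u) t R φ Z
          + (dZ vpar t R φ Z * (-(1 / R) * dR ψ t R φ Z)
              + vpar t R φ Z * (-(1 / R) * dZ (dR ψ) t R φ Z))) Z := by
      have := ((hasDerivAt_dZ hu.dR' t R φ Z).const_mul R).add
        ((hasDerivAt_dZ hv t R φ Z).mul ((hasDerivAt_dZ hψ.dR' t R φ Z).const_mul (-(1 / R))))
      exact this
    exact h1.deriv
  simp only [advS, divC]
  rw [eA, eB, eC, clairaut_RZ hu, clairaut_RZ hψ]
  simp only [vtotR, vtotP, vtotZ, vR, vZ, BR, BP, BZ, pb]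
  field_simp
  ring

/-- the advection–compression combination for the density, and the
resulting evolution form of the density equation. -/
theorem density_advection_compression (F0 : ℝ) (ψ u vpar ρ : F4)
    (hψ : Smooth4 ψ) (hu : Smooth4 u) (hv : Smooth4 vpar) (hρ : Smooth4 ρ) :
    (∀ t R φ Z : ℝ, 0 < R →
      advS (vtotR ψ u vpar) (vtotP F0 vpar) (vtotZ ψ u vpar) ρ t R φ Z
        + ρ t R φ Z * divC (vtotR ψ u vpar) (vtotP F0 vpar) (vtotZ ψ u vpar) t R φ Z
      = -R * pb ρ u t R φ Z - 2 * ρ t R φ Z * dZ u t R φ Z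
        + (vpar t R φ Z * F0 / R ^ 2) * dP ρ t R φ Z
        + (vpar t R φ Z / R) * pb ρ ψ t R φ Z
        + (ρ t R φ Z / R) * pb vpar ψ t R φ Z
        + (ρ t R φ Z * F0 / R ^ 2) * dP vpar t R φ Z) ∧
    ((∀ t R φ Z : ℝ, 0 < R →
        dT ρ t R φ Z
          = -advS (vtotR ψ u vpar) (vtotP F0 vpar) (vtotZ ψ u vpar) ρ t R φ Z
            - ρ t R φ Z * divC (vtotR ψ u vpar) (vtotP F0 vpar) (vtotZ ψ u vpar) t R φ Z) →
      ∀ t R φ Z : ℝ, 0 < R →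
        dT ρ t R φ Z
          = R * pb ρ u t R φ Z + 2 * ρ t R φ Z * dZ u t R φ Z
            - (vpar t R φ Z * F0 / R ^ 2) * dP ρ t R φ Z
            - (vpar t R φ Z / R) * pb ρ ψ t R φ Z
            - (ρ t R φ Z / R) * pb vpar ψ t R φ Z
            - (ρ t R φ Z * F0 / R ^ 2) * dP vpar t R φ Z) := by
  constructor
  · intro t R φ Z hR
    exact density_key F0 ψ u vpar ρ hψ hu hv hρ t R φ Z hR
  · intro h t R φ Z hR
    have h1 := density_key F0 ψ u vpar ρ hψ hu hv hρ t R φ Z hR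
    rw [h t R φ Z hR]
    linarith
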